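/- Let ν be a nonzero measure on (0,∞) satisfying ν(s·B) = s^{-2}ν(B) for a fixed s > 1 and all Borel B ⊂ (0,∞), and suppose ∫ (x² ∧ 1) ν(dx) < ∞. Then ν = 0. -/

import Mathlib

open MeasureTheory
open scoped ENNReal

/-- Let `ν` be a measure on `(0,∞)` satisfying `ν(sB) = s^{-2} ν(B)` for a fixed `s > 1`
and all Borel `B ⊆ (0,∞)`, and suppose `∫ (x² ∧ 1) ν(dx) < ∞`.  Then `ν = 0`. -/
theorem stmt11 (ν : Measure ℝ) (s : ℝ) (hs : 1 < s)
    (hsupp : ν (Set.Iic 0) = 0)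
    (hscale : ∀ B : Set ℝ, MeasurableSet B →
      ν ((fun x => s * x) '' B) = ENNReal.ofReal (s ^ (-2 : ℝ)) * ν B)
    (hint : ∫⁻ x in Set.Ioi (0 : ℝ), ENNReal.ofReal (min (x ^ 2) 1) ∂ν ≠ ⊤) :
    ν = 0 := by
  have hs0 : (0 : ℝ) < s := lt_trans one_pos hs
  set c : ℝ≥0∞ := ENNReal.ofReal (s ^ (-2 : ℝ)) with hc
  have hr : s ^ (-2 : ℝ) = (s ^ 2)⁻¹ := by
    rw [show (-2 : ℝ) = -(2 : ℕ) by norm_num, Real.rpow_neg hs0.le, Real.rpow_natCast]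
  have hrpos : (0 : ℝ) < s ^ (-2 : ℝ) := by
    rw [hr]; positivity
  have hcpos : c ≠ 0 := by
    simp [hc, ENNReal.ofReal_eq_zero, not_le, hrpos, hs0.ne']
  have hcne : c ≠ ⊤ := ENNReal.ofReal_ne_top
  -- image of Ioc under multiplication by s
  have himg : ∀ a b : ℝ, (fun x => s * x) '' Set.Ioc a b = Set.Ioc (s * a) (s * b) := by
    intro a b
    ext y
    simp only [Set.mem_image, Set.mem_Ioc]
    constructor
    · rintro ⟨x, ⟨h1, h2⟩, rfl⟩
      constructor
      · exact (mul_lt_mul_iff_right₀ hs0).2 h1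
      · exact (mul_le_mul_iff_right₀ hs0).2 h2
    · rintro ⟨h1, h2⟩
      refine ⟨y / s, ⟨?_, ?_⟩, by field_simp⟩
      · rw [lt_div_iff₀ hs0]; linarith [h1]
      · rw [div_le_iff₀ hs0]; linarith [h2]
  -- the annuli
  set A : ℕ → Set ℝ := fun n => Set.Ioc ((s ^ (n + 1))⁻¹) ((s ^ n)⁻¹) with hA
  have hAmeas : ∀ n, MeasurableSet (A n) := fun n => measurableSet_Ioc
  have hstep : ∀ n, ν (A n) = c * ν (A (n + 1)) := by
    intro n
    have h := hscale (A (n + 1)) (hAmeas (n + 1))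
    rw [hA] at h ⊢
    simp only at h
    rw [himg] at h
    have e1 : s * (s ^ (n + 1 + 1))⁻¹ = (s ^ (n + 1))⁻¹ := by
      field_simp; ring
    have e2 : s * (s ^ (n + 1))⁻¹ = (s ^ n)⁻¹ := by
      field_simp; ring
    rw [e1, e2] at h
    exact h
  have hiter : ∀ n, ν (A 0) = c ^ n * ν (A n) := by
    intro n
    induction n with
    | zero => simp
    | succ n ih => rw [ih, hstep n, pow_succ, mul_assoc]
  -- ν (A 0) = 0 from the integrability
  have hA0 : ν (A 0) = 0 := by
    by_contra hne
    -- the annuli are pairwise disjoint and contained in Ioi 0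
    have hsub : ∀ n, A n ⊆ Set.Ioi (0 : ℝ) := by
      intro n x hx
      have : (0 : ℝ) < (s ^ (n + 1))⁻¹ := by positivity
      exact lt_trans this hx.1
    have hdisj : Pairwise (Function.onFun Disjoint A) := by
      intro i j hij
      rcases hij.lt_or_gt with h | h
      · apply Set.Ioc_disjoint_Ioc.2
        have hle : (s ^ j)⁻¹ ≤ (s ^ (i + 1))⁻¹ := by
          apply inv_anti₀ (by positivity)
          exact pow_le_pow_right₀ hs.le h
        exact (min_le_right _ _).trans (hle.trans (le_max_left _ _))
      · apply Set.Ioc_disjoint_Ioc.2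
        have hle : (s ^ i)⁻¹ ≤ (s ^ (j + 1))⁻¹ := by
          apply inv_anti₀ (by positivity)
          exact pow_le_pow_right₀ hs.le h
        exact (min_le_left _ _).trans (hle.trans (le_max_right _ _))
    -- lower bound on the integral over each annulus
    have hlow : ∀ n : ℕ, c * ν (A 0) ≤ ∫⁻ x in A n, ENNReal.ofReal (min (x ^ 2) 1) ∂ν := by
      intro n
      have hbound : ∀ x ∈ A n, c ^ (n + 1) ≤ ENNReal.ofReal (min (x ^ 2) 1) := by
        intro x hx
        have hx1 : (s ^ (n + 1))⁻¹ < x := hx.1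
        have hx2 : x ≤ (s ^ n)⁻¹ := hx.2
        have hs1 : (1 : ℝ) ≤ s ^ (n + 1) := one_le_pow₀ hs.le
        have hxpos : (0 : ℝ) < x := lt_of_lt_of_le (by positivity) hx1.le
        have key : ((s ^ (n + 1))⁻¹) ^ 2 ≤ min (x ^ 2) 1 := by
          apply le_min
          · apply pow_le_pow_left₀ (by positivity) hx1.le
          · have h1 : (s ^ (n + 1))⁻¹ ≤ 1 := inv_le_one_of_one_le₀ hs1
            nlinarith [inv_pos.2 (lt_of_lt_of_le one_pos hs1)]
        calc c ^ (n + 1) = ENNReal.ofReal ((s ^ (-2 : ℝ)) ^ (n + 1)) := by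
              rw [hc, ← ENNReal.ofReal_pow hrpos.le]
          _ = ENNReal.ofReal (((s ^ (n + 1))⁻¹) ^ 2) := by
              congr 1
              rw [hr]
              rw [← inv_pow, ← inv_pow, ← pow_mul, ← pow_mul, Nat.mul_comm]
          _ ≤ ENNReal.ofReal (min (x ^ 2) 1) := ENNReal.ofReal_le_ofReal key
      calc c * ν (A 0) = c * (c ^ n * ν (A n)) := by rw [← hiter n]
        _ = c ^ (n + 1) * ν (A n) := by rw [pow_succ, mul_comm (c ^ n) c, mul_assoc]
        _ = ∫⁻ _ in A n, c ^ (n + 1) ∂ν := (setLIntegral_const _ _).symm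
        _ ≤ ∫⁻ x in A n, ENNReal.ofReal (min (x ^ 2) 1) ∂ν :=
            setLIntegral_mono' (hAmeas n) hbound
    have htop : (⊤ : ℝ≥0∞) ≤ ∫⁻ x in Set.Ioi (0 : ℝ), ENNReal.ofReal (min (x ^ 2) 1) ∂ν := by
      calc (⊤ : ℝ≥0∞) = ∑' _ : ℕ, c * ν (A 0) := by
            rw [ENNReal.tsum_const_eq_top_of_ne_zero (mul_ne_zero hcpos hne)]
        _ ≤ ∑' n : ℕ, ∫⁻ x in A n, ENNReal.ofReal (min (x ^ 2) 1) ∂ν :=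
            ENNReal.tsum_le_tsum hlow
        _ = ∫⁻ x in ⋃ n, A n, ENNReal.ofReal (min (x ^ 2) 1) ∂ν :=
            (lintegral_iUnion hAmeas hdisj _).symm
        _ ≤ ∫⁻ x in Set.Ioi (0 : ℝ), ENNReal.ofReal (min (x ^ 2) 1) ∂ν := by
            apply lintegral_mono' (Measure.restrict_mono (Set.iUnion_subset hsub) le_rfl) le_rfl
    exact hint (top_le_iff.1 htop)
  -- hence all annuli have measure zero
  have hAall : ∀ n, ν (A n) = 0 := by
    intro n
    have h := hiter n
    rw [hA0] at h
    rcases mul_eq_zero.1 h.symm with h' | h'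
    · exact absurd h' (pow_ne_zero n hcpos)
    · exact h'
  -- ν (Ioc 0 1) = 0
  have hIoc01 : ν (Set.Ioc (0 : ℝ) 1) = 0 := by
    have hsub : Set.Ioc (0 : ℝ) 1 ⊆ ⋃ n, A n := by
      intro x hx
      have hxpos : (0 : ℝ) < x := hx.1
      have hex : ∃ n : ℕ, (s ^ n)⁻¹ < x := by
        obtain ⟨n, hn⟩ := pow_unbounded_of_one_lt x⁻¹ hs
        exact ⟨n, by rwa [inv_lt_comm₀ (by positivity) hxpos]⟩
      classical
      set k := Nat.find hex with hk
      have hklt : (s ^ k)⁻¹ < x := Nat.find_spec hex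
      have hkpos : 0 < k := by
        rcases Nat.eq_zero_or_pos k with h0 | h0
        · exfalso
          have := hklt
          rw [h0] at this
          simp only [pow_zero, inv_one] at this
          exact absurd hx.2 (not_le.2 this)
        · exact h0
      refine Set.mem_iUnion.2 ⟨k - 1, ?_⟩
      have hk1 : k - 1 + 1 = k := Nat.succ_pred_eq_of_pos hkpos
      constructor
      · rw [hk1]; exact hklt
      · have := Nat.find_min hex (m := k - 1) (by omega)
        push_neg at this
        exact this
    apply le_antisymm _ zero_le
    calc ν (Set.Ioc (0 : ℝ) 1) ≤ ν (⋃ n, A n) := measure_mono hsub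
      _ ≤ ∑' n, ν (A n) := measure_iUnion_le A
      _ = 0 := by simp [hAall]
  -- propagate upwards: ν (Ioc 0 (s^n)) = 0
  have hC : ∀ n : ℕ, ν (Set.Ioc (0 : ℝ) (s ^ n)) = 0 := by
    intro n
    induction n with
    | zero => simpa using hIoc01
    | succ n ih =>
      have h := hscale (Set.Ioc (0 : ℝ) (s ^ n)) measurableSet_Ioc
      rw [himg, mul_zero, ih, mul_zero] at h
      rw [← pow_succ'] at h
      exact h
  -- ν (Ioi 0) = 0
  have hIoi : ν (Set.Ioi (0 : ℝ)) = 0 := by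
    have hsub : Set.Ioi (0 : ℝ) ⊆ ⋃ n, Set.Ioc (0 : ℝ) (s ^ n) := by
      intro x hx
      obtain ⟨n, hn⟩ := pow_unbounded_of_one_lt x hs
      exact Set.mem_iUnion.2 ⟨n, hx, hn.le⟩
    apply le_antisymm _ zero_le
    calc ν (Set.Ioi (0 : ℝ)) ≤ ν (⋃ n, Set.Ioc (0 : ℝ) (s ^ n)) := measure_mono hsub
      _ ≤ ∑' n, ν (Set.Ioc (0 : ℝ) (s ^ n)) := measure_iUnion_le _
      _ = 0 := by simp [hC]
  -- conclude
  rw [← Measure.measure_univ_eq_zero]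
  apply le_antisymm _ zero_le
  calc ν Set.univ = ν (Set.Iic 0 ∪ Set.Ioi 0) := by rw [Set.Iic_union_Ioi]
    _ ≤ ν (Set.Iic 0) + ν (Set.Ioi 0) := measure_union_le _ _
    _ = 0 := by rw [hsupp, hIoi, add_zero]
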